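/- In the spin chain algebra extended by the Jordan–Wigner element T, the operators c_j* = T S_j (σ_x^{(j)} + iσ_y^{(j)})/2 and c_j = T S_j (σ_x^{(j)} − iσ_y^{(j)})/2 satisfy the canonical anticommutation relations: {c_j, c_k} = {c_j*, c_k*} = 0 and {c_j, c_k*} = δ_{jk}·1 for all integers j, k. -/

import Mathlib

/-- The Jordan–Wigner string `S_j`: `S_j = σ_z⁽⁰⁾⋯σ_z⁽ʲ⁻¹⁾` for `j ≥ 1`, `S_0 = 1`, and
`S_j = σ_z⁽ʲ⁾⋯σ_z⁽⁻¹⁾` for `j ≤ −1`. -/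
noncomputable def jwString {A : Type*} [Ring A] (σz : ℤ → A) : ℤ → A := fun j =>
  if 0 ≤ j then ((List.range j.toNat).map fun k => σz (k : ℤ)).prod
  else ((List.range (-j).toNat).map fun k => σz (j + (k : ℤ))).prod

private lemma auxSmulMul {A : Type*} [Ring A] [Algebra ℂ A] (r s : ℂ) (x y : A) :
    (r • x) * (s • y) = (r * s) • (x * y) := by
  rw [smul_mul_assoc, mul_smul_comm, smul_smul]

private lemma auxProdComm {A : Type*} [Monoid A] (x : A) :
    ∀ l : List A, (∀ a ∈ l, a * x = x * a) → l.prod * x = x * l.prod := by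
  intro l
  induction l with
  | nil => simp
  | cons a l ih =>
    intro hl
    have ha := hl a (by simp)
    have ih' := ih (fun b hb => hl b (by simp [hb]))
    simp only [List.prod_cons]
    rw [mul_assoc, ih', ← mul_assoc, ha, mul_assoc]

private lemma auxProdSq {A : Type*} [Monoid A] :
    ∀ l : List A, (∀ a ∈ l, ∀ b ∈ l, a * b = b * a) → (∀ a ∈ l, a * a = 1) →
      l.prod * l.prod = 1 := by
  intro l
  induction l with
  | nil => simp
  | cons a l ih =>
    intro hc h1
    simp only [List.prod_cons]
    have hpa : l.prod * a = a * l.prod :=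
      auxProdComm a l (fun b hb => hc b (by simp [hb]) a (by simp))
    have ih' := ih (fun b hb c hcm => hc b (by simp [hb]) c (by simp [hcm]))
      (fun b hb => h1 b (by simp [hb]))
    rw [mul_assoc, ← mul_assoc l.prod a l.prod, hpa, mul_assoc a l.prod l.prod, ih', mul_one]
    exact h1 a (by simp)

private lemma auxSign {A : Type*} [Ring A] (f : ℤ → A) (x : A) (j : ℤ)
    (hj : f j * x = -(x * f j)) (ho : ∀ m, m ≠ j → f m * x = x * f m) :
    ∀ l : List ℤ, l.Nodup →
      (l.map f).prod * x =
        if j ∈ l then -(x * (l.map f).prod) else x * (l.map f).prod := by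
  intro l
  induction l with
  | nil => simp
  | cons m l ih =>
    intro hnd
    obtain ⟨hm, hnd'⟩ := List.nodup_cons.mp hnd
    have ih' := ih hnd'
    simp only [List.map_cons, List.prod_cons, List.mem_cons]
    by_cases hjm : j = m
    · subst hjm
      rw [if_pos (Or.inl rfl), mul_assoc, ih', if_neg hm, ← mul_assoc, hj, neg_mul, mul_assoc]
    · have hmx := ho m (fun h => hjm h.symm)
      rw [mul_assoc, ih']
      by_cases hjl : j ∈ l
      · rw [if_pos hjl, if_pos (Or.inr hjl), mul_neg, ← mul_assoc, hmx, mul_assoc]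
      · rw [if_neg hjl, if_neg (by tauto), ← mul_assoc, hmx, mul_assoc]

/-- Jordan–Wigner transformation.  In the spin chain algebra extended by the
element `T` (a self-adjoint unitary with `TQT = Θ₋(Q)`, i.e. conjugation by `T` flips
`σ_x, σ_y` at negative sites and fixes everything at sites `≥ 0`), the operators
`c_j* = T S_j (σ_x⁽ʲ⁾ + iσ_y⁽ʲ⁾)/2` and `c_j = T S_j (σ_x⁽ʲ⁾ − iσ_y⁽ʲ⁾)/2` satisfy the
canonical anticommutation relations `{c_j, c_k} = {c_j*, c_k*} = 0` and
`{c_j, c_k*} = δ_{jk}·1` for all integers `j, k`. -/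
theorem stmt19 {A : Type*} [Ring A] [Algebra ℂ A] [StarRing A] [StarModule ℂ A]
    (σx σy σz : ℤ → A) (T : A)
    -- Pauli relations at each site
    (hx2 : ∀ j, σx j * σx j = 1) (hy2 : ∀ j, σy j * σy j = 1) (hz2 : ∀ j, σz j * σz j = 1)
    (hxy : ∀ j, σx j * σy j = Complex.I • σz j)
    (hyx : ∀ j, σy j * σx j = -(Complex.I • σz j))
    (hyz : ∀ j, σy j * σz j = Complex.I • σx j)
    (hzy : ∀ j, σz j * σy j = -(Complex.I • σx j))
    (hzx : ∀ j, σz j * σx j = Complex.I • σy j)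
    (hxz : ∀ j, σx j * σz j = -(Complex.I • σy j))
    (hsx : ∀ j, star (σx j) = σx j) (hsy : ∀ j, star (σy j) = σy j)
    (hsz : ∀ j, star (σz j) = σz j)
    -- Pauli operators at different sites commute
    (hcomm : ∀ j k : ℤ, j ≠ k → ∀ a b : A, a ∈ ({σx j, σy j, σz j} : Set A) →
      b ∈ ({σx k, σy k, σz k} : Set A) → a * b = b * a)
    -- the Jordan–Wigner element T
    (hT2 : T * T = 1) (hTstar : star T = T)
    (hTneg : ∀ j : ℤ, j < 0 →
      T * σx j = -(σx j) * T ∧ T * σy j = -(σy j) * T ∧ T * σz j = σz j * T)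
    (hTpos : ∀ j : ℤ, 0 ≤ j →
      T * σx j = σx j * T ∧ T * σy j = σy j * T ∧ T * σz j = σz j * T) :
    ∀ j k : ℤ,
      (let c : ℤ → A := fun i =>
        ((2 : ℂ))⁻¹ • (T * jwString σz i * (σx i - Complex.I • σy i))
      let cd : ℤ → A := fun i =>
        ((2 : ℂ))⁻¹ • (T * jwString σz i * (σx i + Complex.I • σy i))
      c j * c k + c k * c j = 0 ∧
      cd j * cd k + cd k * cd j = 0 ∧
      c j * cd k + cd k * c j = (if j = k then (1 : A) else 0)) := by
  intro j k
  set S : ℤ → A := jwString σz with hSdef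
  set a' : ℤ → A := fun i => σx i - Complex.I • σy i with ha'def
  set b' : ℤ → A := fun i => σx i + Complex.I • σy i with hb'def
  -- basic commutation facts
  have hzzc : ∀ m n : ℤ, σz m * σz n = σz n * σz m := by
    intro m n
    rcases eq_or_ne m n with rfl | h
    · rfl
    · exact hcomm m n h _ _ (by simp) (by simp)
  have hzx' : ∀ m n : ℤ, m ≠ n → σz m * σx n = σx n * σz m :=
    fun m n h => hcomm m n h _ _ (by simp) (by simp)
  have hzy' : ∀ m n : ℤ, m ≠ n → σz m * σy n = σy n * σz m :=
    fun m n h => hcomm m n h _ _ (by simp) (by simp)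
  have hTz : ∀ m, T * σz m = σz m * T := by
    intro m
    rcases lt_or_ge m 0 with h | h
    · exact (hTneg m h).2.2
    · exact (hTpos m h).2.2
  -- structure of the string S
  have hSform : ∀ i : ℤ, ∃ l : List ℤ, l.Nodup ∧ S i = (l.map σz).prod ∧
      (∀ m : ℤ, m ∈ l ↔ (0 ≤ m ∧ m < i) ∨ (i ≤ m ∧ m < 0)) := by
    intro i
    rw [hSdef]
    unfold jwString
    by_cases h : 0 ≤ i
    · refine ⟨(List.range i.toNat).map (fun n : ℕ => (n : ℤ)), ?_, ?_, ?_⟩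
      · exact List.Nodup.map (fun a b hab => by exact_mod_cast hab) List.nodup_range
      · rw [if_pos h, List.map_map]
        simp [List.flatMap, List.map_map, Function.comp_def]
      · intro m
        simp only [List.mem_map, List.mem_range]
        constructor
        · rintro ⟨n, hn, rfl⟩; omega
        · intro hm; exact ⟨m.toNat, by omega, by omega⟩
    · refine ⟨(List.range (-i).toNat).map (fun n : ℕ => i + (n : ℤ)), ?_, ?_, ?_⟩
      · exact List.Nodup.map (fun a b hab => by omega) List.nodup_range
      · rw [if_neg h, List.map_map]
        simp [List.flatMap, List.map_map, Function.comp_def]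
      · intro m
        simp only [List.mem_map, List.mem_range]
        constructor
        · rintro ⟨n, hn, rfl⟩; omega
        · intro hm; exact ⟨(m - i).toNat, by omega, by omega⟩
  have hTS : ∀ i, T * S i = S i * T := by
    intro i
    obtain ⟨l, _, hSl, _⟩ := hSform i
    rw [hSl]
    refine (auxProdComm T _ ?_).symm
    rintro a ha
    simp only [List.mem_map] at ha
    obtain ⟨m, _, rfl⟩ := ha
    exact (hTz m).symm
  have hSz : ∀ m i, S i * σz m = σz m * S i := by
    intro m i
    obtain ⟨l, _, hSl, _⟩ := hSform i
    rw [hSl]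
    refine auxProdComm (σz m) _ ?_
    rintro a ha
    simp only [List.mem_map] at ha
    obtain ⟨n, _, rfl⟩ := ha
    exact hzzc n m
  have hSS : ∀ i, S i * S i = 1 := by
    intro i
    obtain ⟨l, _, hSl, _⟩ := hSform i
    rw [hSl]
    refine auxProdSq _ ?_ ?_
    · rintro a ha b hb
      simp only [List.mem_map] at ha hb
      obtain ⟨m, _, rfl⟩ := ha
      obtain ⟨n, _, rfl⟩ := hb
      exact hzzc m n
    · rintro a ha
      simp only [List.mem_map] at ha
      obtain ⟨m, _, rfl⟩ := ha
      exact hz2 m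
  have hSSc : ∀ i i', S i * S i' = S i' * S i := by
    intro i i'
    obtain ⟨l, _, hSl, _⟩ := hSform i
    rw [hSl]
    refine auxProdComm (S i') _ ?_
    rintro a ha
    simp only [List.mem_map] at ha
    obtain ⟨m, _, rfl⟩ := ha
    exact (hSz m i').symm
  have hSsign : ∀ (i : ℤ) (x : A), σz i * x = -(x * σz i) →
      (∀ m, m ≠ i → σz m * x = x * σz m) → ∀ p : ℤ,
      S p * x = if (0 ≤ i ∧ i < p) ∨ (p ≤ i ∧ i < 0) then -(x * S p) else x * S p := by
    intro i x hjx hox p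
    obtain ⟨l, hnd, hSl, hmem⟩ := hSform p
    rw [hSl, auxSign σz x i hjx hox l hnd]
    by_cases hin : i ∈ l
    · rw [if_pos hin, if_pos ((hmem i).mp hin)]
    · rw [if_neg hin, if_neg (fun hc => hin ((hmem i).mpr hc))]
  have hTsx : ∀ i, T * σx i = if i < 0 then -(σx i * T) else σx i * T := by
    intro i
    rcases lt_or_ge i 0 with h | h
    · rw [if_pos h, (hTneg i h).1, neg_mul]
    · rw [if_neg (not_lt.mpr h), (hTpos i h).1]
  have hTsy : ∀ i, T * σy i = if i < 0 then -(σy i * T) else σy i * T := by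
    intro i
    rcases lt_or_ge i 0 with h | h
    · rw [if_pos h, (hTneg i h).2.1, neg_mul]
    · rw [if_neg (not_lt.mpr h), (hTpos i h).2.1]
  -- the key sign lemma for T * S p
  have hU : ∀ (i : ℤ) (x : A), σz i * x = -(x * σz i) →
      (∀ m, m ≠ i → σz m * x = x * σz m) →
      (T * x = if i < 0 then -(x * T) else x * T) → ∀ p : ℤ,
      (T * S p) * x = if i < p then -(x * (T * S p)) else x * (T * S p) := by
    intro i x h1 h2 h3 p
    rw [mul_assoc, hSsign i x h1 h2 p]
    by_cases hc1 : (0 ≤ i ∧ i < p) ∨ (p ≤ i ∧ i < 0)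
    · rw [if_pos hc1, mul_neg, ← mul_assoc, h3]
      by_cases hc2 : i < 0
      · rw [if_pos hc2, if_neg (by omega), neg_mul, neg_neg, mul_assoc]
      · rw [if_neg hc2, if_pos (by omega), mul_assoc]
    · rw [if_neg hc1, ← mul_assoc, h3]
      by_cases hc2 : i < 0
      · rw [if_pos hc2, if_pos (by omega), neg_mul, mul_assoc]
      · rw [if_neg hc2, if_neg (by omega), mul_assoc]
  have hUx : ∀ (i p : ℤ),
      (T * S p) * σx i = if i < p then -(σx i * (T * S p)) else σx i * (T * S p) :=
    fun i p => hU i (σx i) (by rw [hzx i, hxz i, neg_neg])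
      (fun m hm => hzx' m i hm) (hTsx i) p
  have hUy : ∀ (i p : ℤ),
      (T * S p) * σy i = if i < p then -(σy i * (T * S p)) else σy i * (T * S p) :=
    fun i p => hU i (σy i) (by rw [hzy i, hyz i])
      (fun m hm => hzy' m i hm) (hTsy i) p
  have hUa : ∀ (i p : ℤ),
      (T * S p) * a' i = if i < p then -(a' i * (T * S p)) else a' i * (T * S p) := by
    intro i p
    show (T * S p) * (σx i - Complex.I • σy i) = _
    rw [mul_sub, mul_smul_comm, hUx i p, hUy i p]
    split_ifs with h
    · rw [ha'def]; simp only [sub_mul, smul_mul_assoc]; module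
    · rw [ha'def]; simp only [sub_mul, smul_mul_assoc]
  have hUb : ∀ (i p : ℤ),
      (T * S p) * b' i = if i < p then -(b' i * (T * S p)) else b' i * (T * S p) := by
    intro i p
    show (T * S p) * (σx i + Complex.I • σy i) = _
    rw [mul_add, mul_smul_comm, hUx i p, hUy i p]
    split_ifs with h
    · rw [hb'def]; simp only [add_mul, smul_mul_assoc]; module
    · rw [hb'def]; simp only [add_mul, smul_mul_assoc]
  -- products of the unitaries u p = T * S p
  have hUsq : ∀ p, (T * S p) * (T * S p) = 1 := by
    intro p
    rw [mul_assoc, ← mul_assoc (S p), ← hTS p, ← mul_assoc, ← mul_assoc, hT2, one_mul, hSS p]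
  have hUe : ∀ p q, (T * S p) * (T * S q) = S p * S q := by
    intro p q
    rw [mul_assoc, ← mul_assoc (S p), ← hTS p, ← mul_assoc, ← mul_assoc, hT2, one_mul]
  have hUU : ∀ p q, (T * S p) * (T * S q) = (T * S q) * (T * S p) := by
    intro p q
    rw [hUe, hUe, hSSc]
  -- same-site products
  have haa0 : ∀ i, a' i * a' i = 0 := by
    intro i
    show (σx i - Complex.I • σy i) * (σx i - Complex.I • σy i) = 0
    simp only [sub_mul, mul_sub, smul_mul_assoc, mul_smul_comm, hx2 i, hy2 i, hxy i, hyx i,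
      smul_smul, Complex.I_mul_I, neg_smul, one_smul, smul_neg]
    match_scalars <;> (simp [Complex.I_sq]; try ring)
  have hbb0 : ∀ i, b' i * b' i = 0 := by
    intro i
    show (σx i + Complex.I • σy i) * (σx i + Complex.I • σy i) = 0
    simp only [add_mul, mul_add, smul_mul_assoc, mul_smul_comm, hx2 i, hy2 i, hxy i, hyx i,
      smul_smul, Complex.I_mul_I, neg_smul, one_smul, smul_neg]
    match_scalars <;> (simp [Complex.I_sq]; try ring)
  have habba : ∀ i, a' i * b' i + b' i * a' i = (4 : ℂ) • (1 : A) := by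
    intro i
    show (σx i - Complex.I • σy i) * (σx i + Complex.I • σy i)
        + (σx i + Complex.I • σy i) * (σx i - Complex.I • σy i) = (4 : ℂ) • (1 : A)
    simp only [sub_mul, add_mul, mul_add, mul_sub, smul_mul_assoc, mul_smul_comm,
      hx2 i, hy2 i, hxy i, hyx i, smul_smul, Complex.I_mul_I, neg_smul, one_smul, smul_neg]
    match_scalars <;> (simp [Complex.I_sq]; try ring)
  -- cross-site commutation of a', b'
  have hgen : ∀ p q : ℤ, p ≠ q → ∀ α β : ℂ,
      (σx p + α • σy p) * (σx q + β • σy q) = (σx q + β • σy q) * (σx p + α • σy p) := by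
    intro p q h α β
    have h1 : σx p * σx q = σx q * σx p := hcomm p q h _ _ (by simp) (by simp)
    have h2 : σx p * σy q = σy q * σx p := hcomm p q h _ _ (by simp) (by simp)
    have h3 : σy p * σx q = σx q * σy p := hcomm p q h _ _ (by simp) (by simp)
    have h4 : σy p * σy q = σy q * σy p := hcomm p q h _ _ (by simp) (by simp)
    simp only [add_mul, mul_add, smul_mul_assoc, mul_smul_comm, h1, h2, h3, h4]
    module
  have ha'e : ∀ i, a' i = σx i + (-Complex.I) • σy i := by
    intro i
    show σx i - Complex.I • σy i = _
    rw [neg_smul, sub_eq_add_neg]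
  have hb'e : ∀ i, b' i = σx i + Complex.I • σy i := fun i => rfl
  have hcaa : ∀ p q : ℤ, p ≠ q → a' p * a' q = a' q * a' p := by
    intro p q h; rw [ha'e, ha'e]; exact hgen p q h _ _
  have hcbb : ∀ p q : ℤ, p ≠ q → b' p * b' q = b' q * b' p := by
    intro p q h; rw [hb'e, hb'e]; exact hgen p q h _ _
  have hcab : ∀ p q : ℤ, p ≠ q → a' p * b' q = b' q * a' p := by
    intro p q h; rw [ha'e, hb'e]; exact hgen p q h _ _
  -- core anticommutation computations
  have core0 : ∀ (p q : ℤ) (x y : A),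
      ((T * S q) * x = if p < q then -(x * (T * S q)) else x * (T * S q)) →
      ((T * S p) * y = if q < p then -(y * (T * S p)) else y * (T * S p)) →
      p ≠ q → x * y = y * x →
      ((T * S p) * x) * ((T * S q) * y) + ((T * S q) * y) * ((T * S p) * x) = 0 := by
    intro p q x y hx hy hne hxyc
    rcases lt_or_gt_of_ne hne with h | h
    · rw [if_pos h] at hx
      rw [if_neg (by omega)] at hy
      have hx' : x * (T * S q) = -((T * S q) * x) := by rw [hx, neg_neg]
      have hy' : y * (T * S p) = (T * S p) * y := hy.symm
      have e1 : ((T * S p) * x) * ((T * S q) * y) = -(((T * S p) * (T * S q)) * (x * y)) := by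
        calc ((T * S p) * x) * ((T * S q) * y)
            = (T * S p) * ((x * (T * S q)) * y) := by rw [mul_assoc, ← mul_assoc x]
          _ = (T * S p) * ((-((T * S q) * x)) * y) := by rw [hx']
          _ = -(((T * S p) * (T * S q)) * (x * y)) := by
              rw [neg_mul, mul_neg, mul_assoc ((T : A) * S q) x y, ← mul_assoc (T * S p)]
      have e2 : ((T * S q) * y) * ((T * S p) * x) = ((T * S p) * (T * S q)) * (x * y) := by
        calc ((T * S q) * y) * ((T * S p) * x)
            = (T * S q) * ((y * (T * S p)) * x) := by rw [mul_assoc, ← mul_assoc y]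
          _ = (T * S q) * (((T * S p) * y) * x) := by rw [hy']
          _ = ((T * S q) * (T * S p)) * (y * x) := by
              rw [mul_assoc ((T : A) * S p) y x, ← mul_assoc (T * S q)]
          _ = ((T * S p) * (T * S q)) * (x * y) := by rw [hxyc, hUU]
      rw [e1, e2, neg_add_cancel]
    · rw [if_neg (by omega)] at hx
      rw [if_pos h] at hy
      have hx' : x * (T * S q) = (T * S q) * x := hx.symm
      have hy' : y * (T * S p) = -((T * S p) * y) := by rw [hy, neg_neg]
      have e1 : ((T * S p) * x) * ((T * S q) * y) = ((T * S p) * (T * S q)) * (x * y) := by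
        calc ((T * S p) * x) * ((T * S q) * y)
            = (T * S p) * ((x * (T * S q)) * y) := by rw [mul_assoc, ← mul_assoc x]
          _ = (T * S p) * (((T * S q) * x) * y) := by rw [hx']
          _ = ((T * S p) * (T * S q)) * (x * y) := by
              rw [mul_assoc ((T : A) * S q) x y, ← mul_assoc (T * S p)]
      have e2 : ((T * S q) * y) * ((T * S p) * x) = -(((T * S p) * (T * S q)) * (x * y)) := by
        calc ((T * S q) * y) * ((T * S p) * x)
            = (T * S q) * ((y * (T * S p)) * x) := by rw [mul_assoc, ← mul_assoc y]
          _ = (T * S q) * ((-((T * S p) * y)) * x) := by rw [hy']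
          _ = -(((T * S q) * (T * S p)) * (y * x)) := by
              rw [neg_mul, mul_neg, mul_assoc ((T : A) * S p) y x, ← mul_assoc (T * S q)]
          _ = -(((T * S p) * (T * S q)) * (x * y)) := by rw [hxyc, hUU]
      rw [e1, e2, add_neg_cancel]
  have core1 : ∀ (p : ℤ) (x y : A),
      ((T * S p) * x = x * (T * S p)) → ((T * S p) * y = y * (T * S p)) →
      ((T * S p) * x) * ((T * S p) * y) + ((T * S p) * y) * ((T * S p) * x) = x * y + y * x := by
    intro p x y hx hy
    have e1 : ((T * S p) * x) * ((T * S p) * y) = x * y := by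
      calc ((T * S p) * x) * ((T * S p) * y)
          = (T * S p) * ((x * (T * S p)) * y) := by rw [mul_assoc, ← mul_assoc x]
        _ = (T * S p) * (((T * S p) * x) * y) := by rw [hx]
        _ = ((T * S p) * (T * S p)) * (x * y) := by
            rw [mul_assoc ((T : A) * S p) x y, ← mul_assoc (T * S p)]
        _ = x * y := by rw [hUsq, one_mul]
    have e2 : ((T * S p) * y) * ((T * S p) * x) = y * x := by
      calc ((T * S p) * y) * ((T * S p) * x)
          = (T * S p) * ((y * (T * S p)) * x) := by rw [mul_assoc, ← mul_assoc y]
        _ = (T * S p) * (((T * S p) * y) * x) := by rw [hy]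
        _ = ((T * S p) * (T * S p)) * (y * x) := by
            rw [mul_assoc ((T : A) * S p) y x, ← mul_assoc (T * S p)]
        _ = y * x := by rw [hUsq, one_mul]
    rw [e1, e2]
  -- same-site commutation of u with a', b'
  have hUa0 : ∀ i, (T * S i) * a' i = a' i * (T * S i) := by
    intro i
    have := hUa i i
    rwa [if_neg (lt_irrefl i)] at this
  have hUb0 : ∀ i, (T * S i) * b' i = b' i * (T * S i) := by
    intro i
    have := hUb i i
    rwa [if_neg (lt_irrefl i)] at this
  -- assembly
  refine ⟨?_, ?_, ?_⟩
  · show ((2:ℂ)⁻¹ • ((T * S j) * a' j)) * ((2:ℂ)⁻¹ • ((T * S k) * a' k))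
      + ((2:ℂ)⁻¹ • ((T * S k) * a' k)) * ((2:ℂ)⁻¹ • ((T * S j) * a' j)) = 0
    rw [auxSmulMul, auxSmulMul, ← smul_add]
    rcases eq_or_ne j k with rfl | hne
    · rw [core1 j (a' j) (a' j) (hUa0 j) (hUa0 j), haa0 j, add_zero, smul_zero]
    · rw [core0 j k (a' j) (a' k) (hUa j k) (hUa k j) hne (hcaa j k hne), smul_zero]
  · show ((2:ℂ)⁻¹ • ((T * S j) * b' j)) * ((2:ℂ)⁻¹ • ((T * S k) * b' k))
      + ((2:ℂ)⁻¹ • ((T * S k) * b' k)) * ((2:ℂ)⁻¹ • ((T * S j) * b' j)) = 0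
    rw [auxSmulMul, auxSmulMul, ← smul_add]
    rcases eq_or_ne j k with rfl | hne
    · rw [core1 j (b' j) (b' j) (hUb0 j) (hUb0 j), hbb0 j, add_zero, smul_zero]
    · rw [core0 j k (b' j) (b' k) (hUb j k) (hUb k j) hne (hcbb j k hne), smul_zero]
  · show ((2:ℂ)⁻¹ • ((T * S j) * a' j)) * ((2:ℂ)⁻¹ • ((T * S k) * b' k))
      + ((2:ℂ)⁻¹ • ((T * S k) * b' k)) * ((2:ℂ)⁻¹ • ((T * S j) * a' j))
      = (if j = k then (1 : A) else 0)
    rw [auxSmulMul, auxSmulMul, ← smul_add]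
    rcases eq_or_ne j k with rfl | hne
    · rw [if_pos rfl, core1 j (a' j) (b' j) (hUa0 j) (hUb0 j), habba j, smul_smul]
      norm_num
    · rw [if_neg hne,
        core0 j k (a' j) (b' k) (hUa j k) (hUb k j) hne (hcab j k hne), smul_zero]
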